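/- Let Σ be a finite alphabet, let # be a symbol not in Σ, and let L ⊆ Σ*. Define L' = L ∪ {w#u : w ∈ L, u ∈ (Σ∪{#})*} ⊆ (Σ∪{#})*. Then L = Σ* if and only if L' is cofinite in (Σ∪{#})*, i.e. (Σ∪{#})* \ L' is finite. -/
import Mathlib

lemma _split_unique {σ : Type} (a : List σ) : ∀ (b : List σ) (u v : List (Option σ)),
    a.map some ++ none :: u = b.map some ++ none :: v → a = b := by
  induction a with
  | nil =>
    intro b u v h
    cases b with
    | nil => rfl
    | cons x xs => simp at h
  | cons x xs ih =>
    intro b u v h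
    cases b with
    | nil => simp at h
    | cons y ys =>
      simp only [List.map_cons, List.cons_append, List.cons.injEq, Option.some.injEq] at h
      obtain ⟨rfl, h2⟩ := h
      exact congrArg _ (ih ys u v h2)

/-- Let `#` be a fresh letter (modelled by `none` in `Option σ`, letters of `Σ`
being `some`-letters) and `L ⊆ Σ*`. Let `L' = L ∪ {w#u : w ∈ L, u ∈ (Σ∪{#})*}`. Then
`L = Σ*` iff `L'` is cofinite in `(Σ∪{#})*`. -/
theorem universality_iff_cofinite {σ : Type} [Fintype σ] (L : Set (List σ)) :
    L = Set.univ ↔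
      ({v : List (Option σ) |
          (∃ w ∈ L, v = w.map some) ∨
          (∃ w ∈ L, ∃ u : List (Option σ), v = w.map some ++ none :: u)}ᶜ).Finite := by
  constructor
  · rintro rfl
    have : ({v : List (Option σ) |
          (∃ w ∈ (Set.univ : Set (List σ)), v = w.map some) ∨
          (∃ w ∈ (Set.univ : Set (List σ)), ∃ u : List (Option σ),
            v = w.map some ++ none :: u)}ᶜ) = ∅ := by
      ext v
      simp only [Set.mem_compl_iff, Set.mem_setOf_eq, Set.mem_empty_iff_false,
        iff_false, not_not, Set.mem_univ, true_and]
      induction v with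
      | nil => exact Or.inl ⟨[], rfl⟩
      | cons a v ih =>
        cases a with
        | none => exact Or.inr ⟨[], v, rfl⟩
        | some s =>
          rcases ih with ⟨w, hw⟩ | ⟨w, u, hw⟩
          · exact Or.inl ⟨s :: w, by simp [hw]⟩
          · exact Or.inr ⟨s :: w, u, by simp [hw]⟩
    rw [this]
    exact Set.finite_empty
  · intro hfin
    by_contra hL
    have : ∃ w, w ∉ L := by
      by_contra h
      push_neg at h
      exact hL (Set.eq_univ_of_forall h)
    obtain ⟨w, hw⟩ := this
    have hmem : ∀ n : ℕ, (w.map some ++ none :: List.replicate n none) ∈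
        ({v : List (Option σ) |
          (∃ w ∈ L, v = w.map some) ∨
          (∃ w ∈ L, ∃ u : List (Option σ), v = w.map some ++ none :: u)}ᶜ) := by
      intro n
      simp only [Set.mem_compl_iff, Set.mem_setOf_eq, not_or, not_exists]
      constructor
      · rintro w' ⟨hw', hv⟩
        have : none ∈ w'.map some := by
          rw [← hv]; simp
        simp at this
      · rintro w' ⟨hw', u, hv⟩
        have := _split_unique w' w u (List.replicate n none) hv.symm
        subst this
        exact hw hw'
    have hinj : Function.Injective
        (fun n : ℕ => (w.map some ++ none :: List.replicate n none)) := by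
      intro m n h
      have := congrArg List.length h
      simpa using this
    exact (Set.infinite_of_injective_forall_mem hinj hmem) hfin
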